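/- Let ℓ ≥ 1, γ ∈ (0,1), ε ≥ 0, z ∈ {0,1}^ℓ, and let p, q be as in the LP instance. Then 1 − γ is the maximum (attained) of R = Σ_{y∈Y} r_y p_y over all feasible vectors r : Y → [0,1], i.e., over all r with e^{−ε} q_y R ≤ r_y p_y ≤ e^{ε} q_y R for every y ∈ Y. -/

import Mathlib

open scoped Classical

noncomputable section

/-- Feasibility for the credit-retrofitting linear program: `r : Y → [0,1]` and, with
`R = Σ_y r_y p_y`, for every `y` we have `e^{-ε} q_y R ≤ r_y p_y ≤ e^{ε} q_y R`. -/
def lpFeasible {Y : Type*} [Fintype Y] (ε : ℝ) (p q r : Y → ℝ) : Prop :=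
  (∀ y, r y ∈ Set.Icc (0 : ℝ) 1) ∧
  ∀ y, Real.exp (-ε) * q y * (∑ y', r y' * p y') ≤ r y * p y ∧
       r y * p y ≤ Real.exp ε * q y * (∑ y', r y' * p y')

/-- The counterfactual distribution `q` of the LP instance: uniform on `{0,1}^{ℓ+1}`. -/
def lpQ (ℓ : ℕ) : (Fin (ℓ + 1) → Bool) → ℝ := fun _ => (1 / 2) ^ (ℓ + 1)

/-- The distribution `p` of the LP instance: uniform except on `z∥0` and `z∥1`. -/
def lpP (ℓ : ℕ) (γ ε : ℝ) (z : Fin ℓ → Bool) : (Fin (ℓ + 1) → Bool) → ℝ := fun y =>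
  if y = Fin.snoc z false then (1 / 2) ^ (ℓ + 1) * (Real.exp (-ε) * (1 - γ))
  else if y = Fin.snoc z true then (1 / 2) ^ (ℓ + 1) * (2 - Real.exp (-ε) * (1 - γ))
  else (1 / 2) ^ (ℓ + 1)

set_option maxHeartbeats 1000000 in
/-- For the LP instance given by `lpP` and `lpQ`, `1 - γ` is the attained maximum of
`R = Σ_y r_y p_y` over all feasible `r`. -/
theorem stmt8 (ℓ : ℕ) (hℓ : 1 ≤ ℓ) (γ ε : ℝ) (hγ0 : 0 < γ) (hγ1 : γ < 1) (hε : 0 ≤ ε)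
    (z : Fin ℓ → Bool) :
    IsGreatest
      {R : ℝ | ∃ r : (Fin (ℓ + 1) → Bool) → ℝ,
        lpFeasible ε (lpP ℓ γ ε z) (lpQ ℓ) r ∧ R = ∑ y, r y * lpP ℓ γ ε z y}
      (1 - γ) := by
  classical
  set E : ℝ := Real.exp (-ε) with hEdef
  have hE0 : 0 < E := Real.exp_pos _
  have hE1 : E ≤ 1 := Real.exp_le_one_iff.mpr (by linarith)
  have hEinv : Real.exp ε = E⁻¹ := by
    rw [hEdef, Real.exp_neg, inv_inv]
  have hEinv1 : 1 ≤ E⁻¹ := by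
    rw [le_inv_comm₀ (by norm_num) hE0]; simpa using hE1
  set y0 : Fin (ℓ + 1) → Bool := Fin.snoc z false with hy0
  set y1 : Fin (ℓ + 1) → Bool := Fin.snoc z true with hy1
  have hne : y0 ≠ y1 := by
    intro h
    have := congrFun h (Fin.last ℓ)
    simp [hy0, hy1, Fin.snoc_last] at this
  set c : ℝ := (1 / 2 : ℝ) ^ (ℓ + 1) with hc
  have hc0 : 0 < c := by positivity
  set M : ℝ := (2 : ℝ) ^ (ℓ + 1) with hM
  have hM0 : 0 < M := by positivity
  have hcM : c = M⁻¹ := by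
    rw [hc, hM, ← inv_pow]; norm_num
  have hγ' : (0:ℝ) ≤ 1 - γ := by linarith
  have hP0 : lpP ℓ γ ε z y0 = c * (E * (1 - γ)) := by
    simp [lpP, hy0, hc, hEdef]
  have hP1 : lpP ℓ γ ε z y1 = c * (2 - E * (1 - γ)) := by
    simp only [lpP]
    rw [if_neg (Ne.symm hne)]
    simp [hc, hEdef, hy1]
  have hPother : ∀ y, y ≠ y0 → y ≠ y1 → lpP ℓ γ ε z y = c := by
    intro y h0 h1
    simp [lpP, ← hy0, ← hy1, h0, h1, hc]
  have hden : 0 < 2 - E * (1 - γ) := by nlinarith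
  -- the optimal feasible vector
  set r1 : ℝ := (1 - γ) * (2 - E) / (2 - E * (1 - γ)) with hr1def
  have hr1nonneg : 0 ≤ r1 := by
    apply div_nonneg _ (le_of_lt hden); nlinarith
  have hr1le : r1 ≤ 1 := by
    rw [hr1def, div_le_one hden]; nlinarith
  set r : (Fin (ℓ + 1) → Bool) → ℝ :=
    fun y => if y = y0 then 1 else if y = y1 then r1 else 1 - γ with hr
  have hf0 : r y0 * lpP ℓ γ ε z y0 = c * (E * (1 - γ)) := by
    simp [hr, hP0]
  have hry1 : r y1 = r1 := by
    simp only [hr]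
    rw [if_neg (Ne.symm hne)]
    simp
  have hf1 : r y1 * lpP ℓ γ ε z y1 = c * ((1 - γ) * (2 - E)) := by
    rw [hP1, hry1, hr1def]
    rw [div_mul_eq_mul_div, div_eq_iff hden.ne']
    ring
  have hfother : ∀ y, y ≠ y0 → y ≠ y1 → r y * lpP ℓ γ ε z y = (1 - γ) * c := by
    intro y h0 h1
    simp [hr, h0, h1, hPother y h0 h1]
  have hcard : (Finset.univ : Finset (Fin (ℓ + 1) → Bool)).card = 2 ^ (ℓ + 1) := by
    simp [Fintype.card_fun]
  have hsum : ∑ y, r y * lpP ℓ γ ε z y = 1 - γ := by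
    have hsub : ({y0, y1} : Finset (Fin (ℓ + 1) → Bool)) ⊆ Finset.univ :=
      Finset.subset_univ _
    rw [← Finset.sum_sdiff hsub, Finset.sum_pair hne, hf0, hf1]
    have hconst : ∑ y ∈ Finset.univ \ ({y0, y1} : Finset (Fin (ℓ + 1) → Bool)),
        r y * lpP ℓ γ ε z y
        = ((2 ^ (ℓ + 1) - 2 : ℕ) : ℝ) * ((1 - γ) * c) := by
      rw [Finset.sum_congr rfl (fun y hy => ?_), Finset.sum_const, nsmul_eq_mul]
      · congr 1
        rw [Finset.card_sdiff_of_subset hsub, hcard, Finset.card_pair hne]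
      · simp only [Finset.mem_sdiff, Finset.mem_insert, Finset.mem_singleton,
          not_or] at hy
        exact hfother y hy.2.1 hy.2.2
    rw [hconst]
    have h2le : 2 ≤ 2 ^ (ℓ + 1) := by
      calc 2 = 2 ^ 1 := by norm_num
      _ ≤ 2 ^ (ℓ + 1) := Nat.pow_le_pow_right (by norm_num) (by omega)
    have hcast : ((2 ^ (ℓ + 1) - 2 : ℕ) : ℝ) = M - 2 := by
      rw [Nat.cast_sub h2le]; push_cast [hM]; ring
    rw [hcast, hcM]
    field_simp
    ring
  constructor
  · -- membership
    refine ⟨r, ⟨⟨fun y => ?_, fun y => ?_⟩, hsum.symm⟩⟩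
    · rw [Set.mem_Icc, hr]
      dsimp only
      split_ifs with h0 h1
      · norm_num
      · exact ⟨hr1nonneg, hr1le⟩
      · constructor <;> linarith
    · rw [hsum, hEinv]
      simp only [lpQ, ← hc]
      have hcg : 0 ≤ c * (1 - γ) := mul_nonneg hc0.le hγ'
      have hE2 : E * (2 - E) ≤ 1 := by nlinarith [sq_nonneg (E - 1)]
      have key : 2 - E ≤ E⁻¹ := by
        have h := mul_le_mul_of_nonneg_left hE2 (le_of_lt (inv_pos.mpr hE0))
        rw [mul_one] at h
        calc 2 - E = E⁻¹ * (E * (2 - E)) := by field_simp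
        _ ≤ E⁻¹ := h
      by_cases h0 : y = y0
      · rw [h0, hf0]
        constructor
        · linarith [mul_le_mul_of_nonneg_right (le_refl E) hcg]
        · have hEE : E ≤ E⁻¹ := le_trans hE1 hEinv1
          linarith [mul_le_mul_of_nonneg_right hEE hcg]
      · by_cases h1 : y = y1
        · rw [h1, hf1]
          constructor
          · linarith [mul_le_mul_of_nonneg_right (show E ≤ 2 - E by linarith) hcg]
          · linarith [mul_le_mul_of_nonneg_right key hcg]
        · rw [hfother y h0 h1]
          constructor
          · linarith [mul_le_mul_of_nonneg_right hE1 hcg]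
          · linarith [mul_le_mul_of_nonneg_right hEinv1 hcg]
  · -- upper bound
    rintro R ⟨r', ⟨hr01, hband⟩, hR⟩
    set S : ℝ := ∑ y, r' y * lpP ℓ γ ε z y with hS
    have hb := (hband y0).1
    simp only [lpQ, ← hc, ← hS, hP0] at hb
    have hub : r' y0 * (c * (E * (1 - γ))) ≤ c * (E * (1 - γ)) := by
      have hpos : (0:ℝ) ≤ c * (E * (1 - γ)) := by positivity
      exact mul_le_of_le_one_left hpos (hr01 y0).2
    have h1 : E * c * S ≤ c * (E * (1 - γ)) := le_trans hb hub
    have hEc : 0 < E * c := mul_pos hE0 hc0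
    have h2 : (E * c) * S ≤ (E * c) * (1 - γ) := by linarith [h1]
    have hS' : S ≤ 1 - γ := (mul_le_mul_iff_right₀ hEc).mp h2
    rw [hR]; exact hS'
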